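/- Gradient stability of Leon's preconditioner: let m ∈ ℝ^n, η > 0, and let S ⪯ T be positive definite symmetric n×n matrices. Define g_S(m) = η (mm^T + S)^{-1/2} m and g_T(m) = η (mm^T + T)^{-1/2} m. Then ‖g_T(m) − g_S(m)‖²_{T^{1/2}} ≤ η² (tr(√T) − tr(√S)), where ‖x‖²_H = ⟨x, Hx⟩. -/

import Mathlib

open Matrix
open scoped Classical

/-- The positive semidefinite square root of a matrix (zero if not PSD). -/
noncomputable def sqrtM {n : ℕ} (A : Matrix (Fin n) (Fin n) ℝ) : Matrix (Fin n) (Fin n) ℝ :=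
  if h : A.PosSemidef then
    (h.1.eigenvectorUnitary : Matrix (Fin n) (Fin n) ℝ) *
      diagonal ((↑) ∘ Real.sqrt ∘ h.1.eigenvalues) *
      (star (h.1.eigenvectorUnitary : Matrix (Fin n) (Fin n) ℝ))
  else 0

/-- Euclidean norm of a vector. -/
noncomputable def euclNorm {n : ℕ} (v : Fin n → ℝ) : ℝ := Real.sqrt (v ⬝ᵥ v)

/-- The ℓ₂ operator (spectral) norm of a matrix. -/
noncomputable def opNorm {n : ℕ} (A : Matrix (Fin n) (Fin n) ℝ) : ℝ :=
  ⨆ u : {u : Fin n → ℝ // euclNorm u ≤ 1}, euclNorm (A *ᵥ u)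

namespace LeonAux

variable {n : ℕ}

local notation "Mat" => Matrix (Fin n) (Fin n) ℝ

lemma sqrtM_eq {A : Mat} (hA : A.PosSemidef) : sqrtM A =
    (hA.1.eigenvectorUnitary : Mat) * diagonal ((↑) ∘ Real.sqrt ∘ hA.1.eigenvalues) *
      (star (hA.1.eigenvectorUnitary : Mat)) := dif_pos hA

lemma sqrtM_psd {A : Mat} (hA : A.PosSemidef) : (sqrtM A).PosSemidef := by
  rw [sqrtM_eq hA, Matrix.star_eq_conjTranspose]
  refine PosSemidef.mul_mul_conjTranspose_same ?_ _
  exact posSemidef_diagonal_iff.mpr fun i => by simp [Real.sqrt_nonneg]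

lemma sqrtM_mul_self {A : Mat} (hA : A.PosSemidef) : sqrtM A * sqrtM A = A := by
  rw [sqrtM_eq hA]
  set U : Mat := (hA.1.eigenvectorUnitary : Mat) with hUdef
  set D : Mat := diagonal ((↑) ∘ Real.sqrt ∘ hA.1.eigenvalues) with hDdef
  have hU : star U * U = 1 := Unitary.coe_star_mul_self _
  have hD : D * D = diagonal hA.1.eigenvalues := by
    rw [hDdef, diagonal_mul_diagonal]; congr 1; funext i
    simp [Real.mul_self_sqrt (hA.eigenvalues_nonneg i)]
  calc U * D * star U * (U * D * star U) = U * D * (star U * U) * D * star U := by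
        simp only [Matrix.mul_assoc]
  _ = U * (D * D) * star U := by rw [hU, Matrix.mul_one, Matrix.mul_assoc U D D]
  _ = A := by
    rw [hD]
    conv_rhs => rw [hA.1.spectral_theorem]
    simp [hUdef]

lemma psd_dot {M : Mat} (hM : M.PosSemidef) (x : Fin n → ℝ) : 0 ≤ x ⬝ᵥ (M *ᵥ x) := by
  simpa using hM.dotProduct_mulVec_nonneg x

lemma herm_transpose {M : Mat} (hM : M.IsHermitian) : Mᵀ = M := by
  have h := hM
  rw [Matrix.IsHermitian, conjTranspose_eq_transpose_of_trivial] at h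
  exact h

lemma herm_dot {M : Mat} (hM : M.IsHermitian) (x y : Fin n → ℝ) :
    x ⬝ᵥ (M *ᵥ y) = (M *ᵥ x) ⬝ᵥ y := by
  rw [Matrix.dotProduct_mulVec, ← Matrix.mulVec_transpose, herm_transpose hM]

lemma psd_trace_nonneg {M : Mat} (hM : M.PosSemidef) : 0 ≤ M.trace := by
  rw [Matrix.trace]
  refine Finset.sum_nonneg fun i _ => ?_
  have h := psd_dot hM (Pi.single i 1)
  simpa [Matrix.mulVec_single, Matrix.diag] using h

lemma sqrtM_posDef {A : Mat} (hA : A.PosDef) : (sqrtM A).PosDef := by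
  refine .of_dotProduct_mulVec_pos (sqrtM_psd hA.posSemidef).isHermitian fun x hx => ?_
  have h0 : 0 ≤ x ⬝ᵥ (sqrtM A *ᵥ x) := psd_dot (sqrtM_psd hA.posSemidef) x
  rcases h0.lt_or_eq with h | h
  · simpa using h
  · exfalso
    have hz : sqrtM A *ᵥ x = 0 := by
      have := (sqrtM_psd hA.posSemidef).dotProduct_mulVec_zero_iff x
      simp only [star_trivial] at this
      exact this.mp h.symm
    have hAx : A *ᵥ x = 0 := by
      rw [← sqrtM_mul_self hA.posSemidef, ← Matrix.mulVec_mulVec, hz, Matrix.mulVec_zero]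
    have := hA.dotProduct_mulVec_pos hx
    rw [hAx] at this
    simp at this

lemma pd_isUnit_det {M : Mat} (hM : M.PosDef) : IsUnit M.det := hM.det_pos.ne'.isUnit

lemma pd_mul_inv {M : Mat} (hM : M.PosDef) : M * M⁻¹ = 1 :=
  Matrix.mul_nonsing_inv M (pd_isUnit_det hM)

lemma pd_inv_mul {M : Mat} (hM : M.PosDef) : M⁻¹ * M = 1 :=
  Matrix.nonsing_inv_mul M (pd_isUnit_det hM)

lemma conj_psd {P C : Mat} (hP : P.PosSemidef) (hC : C.IsHermitian) :
    (C * P * C).PosSemidef := by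
  have h := hP.mul_mul_conjTranspose_same C
  rwa [hC.eq] at h

lemma conj_pd {P C : Mat} (hP : P.PosDef) (hC : C.PosDef) : (C * P * C).PosDef := by
  refine .of_dotProduct_mulVec_pos ?_ fun x hx => ?_
  · have : (C * P * C)ᴴ = Cᴴ * Pᴴ * Cᴴ := by
      rw [Matrix.conjTranspose_mul, Matrix.conjTranspose_mul, Matrix.mul_assoc]
    rw [Matrix.IsHermitian, this, hC.isHermitian.eq, hP.isHermitian.eq]
  · have hCx : C *ᵥ x ≠ 0 := by
      have hinj : Function.Injective (C.mulVec) :=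
        Matrix.mulVec_injective_iff_isUnit.mpr hC.isUnit
      intro h
      exact hx (hinj (by simpa using h))
    have h := hP.dotProduct_mulVec_pos hCx
    simp only [star_trivial] at h ⊢
    calc 0 < (C *ᵥ x) ⬝ᵥ (P *ᵥ (C *ᵥ x)) := h
    _ = x ⬝ᵥ ((C * P * C) *ᵥ x) := by
        rw [← herm_dot hC.isHermitian, Matrix.mulVec_mulVec, Matrix.mulVec_mulVec]

lemma trace_mul_psd_nonneg {M N : Mat} (hM : M.PosSemidef) (hN : N.PosSemidef) :
    0 ≤ (M * N).trace := by
  have h1 : (sqrtM M * N * sqrtM M).trace = (M * N).trace := by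
    rw [Matrix.trace_mul_cycle, sqrtM_mul_self hM]
  rw [← h1]
  exact psd_trace_nonneg (conj_psd hN (sqrtM_psd hM).isHermitian)

lemma dot_eq_trace (M : Mat) (x : Fin n → ℝ) :
    x ⬝ᵥ (M *ᵥ x) = (M * vecMulVec x x).trace := by
  simp only [Matrix.trace, Matrix.diag, Matrix.mul_apply, Matrix.vecMulVec_apply,
    dotProduct, Matrix.mulVec]
  refine Finset.sum_congr rfl fun i _ => ?_
  rw [Finset.mul_sum]
  exact Finset.sum_congr rfl fun j _ => by ring

lemma psd_smul {P : Mat} (hP : P.PosSemidef) {c : ℝ} (hc : 0 ≤ c) : (c • P).PosSemidef := by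
  refine .of_dotProduct_mulVec_nonneg ?_ fun x => ?_
  · rw [Matrix.IsHermitian, Matrix.conjTranspose_smul, hP.isHermitian.eq, star_trivial]
  · have := psd_dot hP x
    simp only [star_trivial, Matrix.smul_mulVec, dotProduct_smul, smul_eq_mul]
    exact mul_nonneg hc this

/-- Monotonicity of the matrix square root. -/
lemma sqrt_mono {A B : Mat} (hA : A.PosDef) (hB : B.PosDef) (hAB : (B - A).PosSemidef) :
    (sqrtM B - sqrtM A).PosSemidef := by
  set F := sqrtM A with hF
  set G := sqrtM B with hG
  have hFp : F.PosDef := sqrtM_posDef hA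
  have hGp : G.PosDef := sqrtM_posDef hB
  have hD : (G - F).IsHermitian := hGp.isHermitian.sub hFp.isHermitian
  refine hD.posSemidef_iff_eigenvalues_nonneg.mpr fun i => ?_
  show 0 ≤ hD.eigenvalues i
  set v : Fin n → ℝ := ⇑(hD.eigenvectorBasis i) with hv
  set t : ℝ := hD.eigenvalues i with ht
  have hvec : (G - F) *ᵥ v = t • v := hD.mulVec_eigenvectorBasis i
  have hv0 : v ≠ 0 := by
    intro h
    have := hD.eigenvectorBasis.orthonormal.ne_zero i
    exact this (by ext j; exact congrFun h j)
  have hkey : B - A = (G - F) * G + F * (G - F) := by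
    have h1 : G * G = B := sqrtM_mul_self hB.posSemidef
    have h2 : F * F = A := sqrtM_mul_self hA.posSemidef
    rw [← h1, ← h2]; noncomm_ring
  have h0 : 0 ≤ v ⬝ᵥ ((B - A) *ᵥ v) := psd_dot hAB v
  have hsum : v ⬝ᵥ ((B - A) *ᵥ v) = t * (v ⬝ᵥ (G *ᵥ v) + v ⬝ᵥ (F *ᵥ v)) := by
    rw [hkey, Matrix.add_mulVec, dotProduct_add, ← Matrix.mulVec_mulVec,
      ← Matrix.mulVec_mulVec, herm_dot hD, hvec, Matrix.mulVec_smul]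
    simp only [smul_dotProduct, dotProduct_smul, smul_eq_mul]
    ring
  have hpos : 0 < v ⬝ᵥ (G *ᵥ v) + v ⬝ᵥ (F *ᵥ v) := by
    have h := (hGp.add hFp).dotProduct_mulVec_pos hv0
    simp only [star_trivial, Matrix.add_mulVec, dotProduct_add] at h
    linarith
  rw [hsum] at h0
  nlinarith

/-- Antitonicity of the matrix inverse. -/
lemma inv_antitone {A B : Mat} (hA : A.PosDef) (hB : B.PosDef) (hAB : (B - A).PosSemidef) :
    (A⁻¹ - B⁻¹).PosSemidef := by
  set G := sqrtM B with hGdef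
  have hGp : G.PosDef := sqrtM_posDef hB
  set R := G⁻¹ with hRdef
  have hRp : R.PosDef := hGp.inv
  have hGR : G * R = 1 := pd_mul_inv hGp
  have hRG : R * G = 1 := pd_inv_mul hGp
  set N := R * A * R with hNdef
  have hNp : N.PosDef := conj_pd hA hRp
  have hRBR : R * B * R = 1 := by
    rw [show B = G * G from (sqrtM_mul_self hB.posSemidef).symm]
    calc R * (G * G) * R = (R * G) * (G * R) := by noncomm_ring
    _ = 1 := by rw [hRG, hGR, one_mul]
  have h1N : (1 - N).PosSemidef := by
    have : (1 : Mat) - N = R * (B - A) * R := by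
      rw [Matrix.mul_sub, Matrix.sub_mul, hRBR, hNdef]
    rw [this]
    exact conj_psd hAB hRp.isHermitian
  set Q := (sqrtM N)⁻¹ with hQdef
  have hQp : Q.PosDef := (sqrtM_posDef hNp).inv
  have hQQ : Q * Q = N⁻¹ := by
    rw [hQdef, ← Matrix.mul_inv_rev, sqrtM_mul_self hNp.posSemidef]
  have hQNQ : Q * N * Q = 1 := by
    rw [show N = sqrtM N * sqrtM N from (sqrtM_mul_self hNp.posSemidef).symm]
    calc Q * (sqrtM N * sqrtM N) * Q = (Q * sqrtM N) * (sqrtM N * Q) := by noncomm_ring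
    _ = 1 := by rw [pd_inv_mul (sqrtM_posDef hNp), pd_mul_inv (sqrtM_posDef hNp), one_mul]
  have hNinv : (N⁻¹ - 1).PosSemidef := by
    have : N⁻¹ - 1 = Q * (1 - N) * Q := by
      rw [Matrix.mul_sub, Matrix.sub_mul, mul_one, hQQ, hQNQ]
    rw [this]
    exact conj_psd h1N hQp.isHermitian
  have hNinv_eq : N⁻¹ = G * A⁻¹ * G := by
    rw [hNdef, Matrix.mul_inv_rev, Matrix.mul_inv_rev, hRdef,
      Matrix.nonsing_inv_nonsing_inv G (pd_isUnit_det hGp), Matrix.mul_assoc]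
  have hfinal : A⁻¹ - B⁻¹ = R * (N⁻¹ - 1) * R := by
    have hRR : R * R = B⁻¹ := by
      rw [hRdef, ← Matrix.mul_inv_rev, sqrtM_mul_self hB.posSemidef]
    have hRN : R * N⁻¹ * R = A⁻¹ := by
      rw [hNinv_eq]
      calc R * (G * A⁻¹ * G) * R = (R * G) * A⁻¹ * (G * R) := by noncomm_ring
      _ = A⁻¹ := by rw [hRG, hGR, one_mul, mul_one]
    rw [Matrix.mul_sub, Matrix.sub_mul, mul_one, hRR, hRN]
  rw [hfinal]
  exact conj_psd hNinv hRp.isHermitian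

/-- Trace AM-GM / tangent inequality: `2 tr √M ≤ tr (X⁻¹ M) + tr X`. -/
lemma tangent {M X : Mat} (hM : M.PosSemidef) (hX : X.PosDef) :
    2 * (sqrtM M).trace ≤ (X⁻¹ * M).trace + X.trace := by
  set R := sqrtM M with hRdef
  have hRp : R.PosSemidef := sqrtM_psd hM
  set Y := X⁻¹ with hYdef
  have hYp : Y.PosDef := hX.inv
  have hYX : Y * X = 1 := pd_inv_mul hX
  have hXY : X * Y = 1 := pd_mul_inv hX
  have hC : (R - X).IsHermitian := hRp.isHermitian.sub hX.isHermitian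
  have hpsd : ((R - X) * Y * (R - X)).PosSemidef := by
    have h := hYp.posSemidef.mul_mul_conjTranspose_same (R - X)
    rwa [hC.eq] at h
  have hexp : (R - X) * Y * (R - X) = R * Y * R - R - R + X := by
    have h1 : R * Y * X = R := by rw [Matrix.mul_assoc, hYX, mul_one]
    have h2 : X * Y * R = R := by rw [hXY, one_mul]
    have h3 : X * Y * X = X := by rw [hXY, one_mul]
    calc (R - X) * Y * (R - X)
        = R * Y * R - R * Y * X - X * Y * R + X * Y * X := by noncomm_ring
    _ = R * Y * R - R - R + X := by rw [h1, h2, h3]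
  have hRR : R * R = M := by rw [hRdef]; exact sqrtM_mul_self hM
  have htr : (R * Y * R).trace = (Y * M).trace := by
    rw [Matrix.trace_mul_cycle, hRR, Matrix.trace_mul_comm]
  have h0 : 0 ≤ ((R - X) * Y * (R - X)).trace := psd_trace_nonneg hpsd
  rw [hexp] at h0
  simp only [Matrix.trace_add, Matrix.trace_sub] at h0
  rw [htr] at h0
  have : (Y * M).trace = (X⁻¹ * M).trace := by rw [hYdef]
  linarith

lemma tangent_ub {A B : Mat} (hA : A.PosDef) (hB : B.PosSemidef) :
    2 * ((sqrtM B).trace - (sqrtM A).trace) ≤ ((sqrtM A)⁻¹ * (B - A)).trace := by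
  have h := tangent hB (sqrtM_posDef hA)
  have hFA : (sqrtM A)⁻¹ * A = sqrtM A := by
    calc (sqrtM A)⁻¹ * A = (sqrtM A)⁻¹ * (sqrtM A * sqrtM A) := by
          rw [sqrtM_mul_self hA.posSemidef]
    _ = sqrtM A := by rw [← Matrix.mul_assoc, pd_inv_mul (sqrtM_posDef hA), one_mul]
  rw [Matrix.mul_sub, Matrix.trace_sub, hFA]
  linarith

lemma tangent_lb {A B : Mat} (hA : A.PosSemidef) (hB : B.PosDef) :
    ((sqrtM B)⁻¹ * (B - A)).trace ≤ 2 * ((sqrtM B).trace - (sqrtM A).trace) := by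
  have h := tangent hA (sqrtM_posDef hB)
  have hGB : (sqrtM B)⁻¹ * B = sqrtM B := by
    calc (sqrtM B)⁻¹ * B = (sqrtM B)⁻¹ * (sqrtM B * sqrtM B) := by
          rw [sqrtM_mul_self hB.posSemidef]
    _ = sqrtM B := by rw [← Matrix.mul_assoc, pd_inv_mul (sqrtM_posDef hB), one_mul]
  rw [Matrix.mul_sub, Matrix.trace_sub, hGB]
  linarith
/-- Trace comparison: if `A - S` is PSD then `tr ((√A)⁻¹ P) ≤ tr ((√S)⁻¹ P)`. -/
lemma trace_invsqrt_antitone {S A P : Mat} (hS : S.PosDef) (hA : A.PosDef)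
    (hSA : (A - S).PosSemidef) (hP : P.PosSemidef) :
    ((sqrtM A)⁻¹ * P).trace ≤ ((sqrtM S)⁻¹ * P).trace := by
  have hsq : (sqrtM A - sqrtM S).PosSemidef := sqrt_mono hS hA hSA
  have hinv : ((sqrtM S)⁻¹ - (sqrtM A)⁻¹).PosSemidef :=
    inv_antitone (sqrtM_posDef hS) (sqrtM_posDef hA) hsq
  have h := trace_mul_psd_nonneg hinv hP
  rw [Matrix.sub_mul, Matrix.trace_sub] at h
  linarith

/-- Submodularity of `tr √` along PSD directions. -/
lemma submod {S A P : Mat} (hS : S.PosDef) (hA : A.PosDef)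
    (hSA : (A - S).PosSemidef) (hP : P.PosSemidef) :
    (sqrtM (A + P)).trace - (sqrtM A).trace ≤ (sqrtM (S + P)).trace - (sqrtM S).trace := by
  have key : ∀ k : ℕ, 0 < k →
      (sqrtM (A + P)).trace - (sqrtM A).trace
        ≤ (sqrtM (S + P)).trace - (sqrtM S).trace + ((sqrtM S)⁻¹ * P).trace / (2 * k) := by
    intro k hk
    have hk0 : (k : ℝ) ≠ 0 := Nat.cast_ne_zero.mpr hk.ne'
    have hkpos : (0 : ℝ) < k := Nat.cast_pos.mpr hk
    set Mf : ℕ → Mat := fun j => S + ((j : ℝ) / k) • P with hMf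
    set Nf : ℕ → Mat := fun j => A + ((j : ℝ) / k) • P with hNf
    have hMfp : ∀ j, (Mf j).PosDef := fun j =>
      hS.add_posSemidef (psd_smul hP (by positivity))
    have hNfp : ∀ j, (Nf j).PosDef := fun j =>
      hA.add_posSemidef (psd_smul hP (by positivity))
    have hdiff : ∀ j, Nf j - Mf j = A - S := by
      intro j; simp only [hMf, hNf]; abel
    have hstep : ∀ j : ℕ, Nf (j + 1) - Nf j = ((1 : ℝ) / k) • P := by
      intro j
      simp only [hNf]
      have : ((((j : ℝ) + 1) / k) • P) - (((j : ℝ) / k) • P) = ((1 : ℝ) / k) • P := by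
        rw [← sub_smul]; congr 1; field_simp; ring
      push_cast
      rw [← this]; abel
    have hstepM : ∀ j : ℕ, Mf (j + 1) - Mf j = ((1 : ℝ) / k) • P := by
      intro j
      simp only [hMf]
      have : ((((j : ℝ) + 1) / k) • P) - (((j : ℝ) / k) • P) = ((1 : ℝ) / k) • P := by
        rw [← sub_smul]; congr 1; field_simp; ring
      push_cast
      rw [← this]; abel
    set c : ℕ → ℝ := fun j => ((sqrtM (Mf j))⁻¹ * P).trace with hc
    have hcnn : ∀ j, 0 ≤ c j := fun j =>
      trace_mul_psd_nonneg (sqrtM_posDef (hMfp j)).inv.posSemidef hP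
    -- upper bound for the N-increments
    have hupper : ∀ j : ℕ,
        (sqrtM (Nf (j + 1))).trace - (sqrtM (Nf j)).trace ≤ c j / (2 * k) := by
      intro j
      have h1 := tangent_ub (hNfp j) (hNfp (j + 1)).posSemidef
      rw [hstep j] at h1
      have h2 : ((sqrtM (Nf j))⁻¹ * (((1 : ℝ) / k) • P)).trace
          = (1 / k) * ((sqrtM (Nf j))⁻¹ * P).trace := by
        rw [Matrix.mul_smul, Matrix.trace_smul, smul_eq_mul]
      have h3 : ((sqrtM (Nf j))⁻¹ * P).trace ≤ c j :=
        trace_invsqrt_antitone (hMfp j) (hNfp j)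
          (by rw [hdiff j]; exact hSA) hP
      rw [h2] at h1
      have h4 : (1 / (k : ℝ)) * ((sqrtM (Nf j))⁻¹ * P).trace ≤ (1 / k) * c j :=
        mul_le_mul_of_nonneg_left h3 (by positivity)
      have h5 : 2 * ((sqrtM (Nf (j + 1))).trace - (sqrtM (Nf j)).trace) ≤ c j / k := by
        have := le_trans h1 h4
        rwa [one_div_mul_eq_div] at this
      have e : c j / (2 * (k : ℝ)) = (c j / k) / 2 := by rw [div_div, mul_comm]
      rw [e]
      linarith
    -- lower bound for the M-increments
    have hlower : ∀ j : ℕ,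
        c (j + 1) / (2 * k) ≤ (sqrtM (Mf (j + 1))).trace - (sqrtM (Mf j)).trace := by
      intro j
      have h1 := tangent_lb (hMfp j).posSemidef (hMfp (j + 1))
      rw [hstepM j] at h1
      have h2 : ((sqrtM (Mf (j + 1)))⁻¹ * (((1 : ℝ) / k) • P)).trace
          = (1 / k) * c (j + 1) := by
        rw [Matrix.mul_smul, Matrix.trace_smul, smul_eq_mul]
      rw [h2, one_div_mul_eq_div] at h1
      have e : c (j + 1) / (2 * (k : ℝ)) = (c (j + 1) / k) / 2 := by rw [div_div, mul_comm]
      rw [e]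
      linarith
    -- telescoping sums
    have hNsum : (sqrtM (Nf k)).trace - (sqrtM (Nf 0)).trace
        ≤ (∑ j ∈ Finset.range k, c j) / (2 * k) := by
      have := Finset.sum_range_sub (fun j => (sqrtM (Nf j)).trace) k
      rw [← this, Finset.sum_div]
      exact Finset.sum_le_sum fun j _ => hupper j
    have hMsum : (∑ j ∈ Finset.range k, c (j + 1)) / (2 * k)
        ≤ (sqrtM (Mf k)).trace - (sqrtM (Mf 0)).trace := by
      have := Finset.sum_range_sub (fun j => (sqrtM (Mf j)).trace) k
      rw [← this, Finset.sum_div]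
      exact Finset.sum_le_sum fun j _ => hlower j
    have hshift : ∑ j ∈ Finset.range k, c (j + 1)
        = (∑ j ∈ Finset.range k, c j) + c k - c 0 := by
      have h1 := Finset.sum_range_succ' c k
      have h2 := Finset.sum_range_succ c k
      -- h1 : ∑_{range (k+1)} c = (∑_{j < k} c (j+1)) + c 0
      -- h2 : ∑_{range (k+1)} c = (∑_{j < k} c j) + c k
      rw [h2] at h1
      linarith
    have hN0 : Nf 0 = A := by simp [hNf]
    have hM0 : Mf 0 = S := by simp [hMf]
    have hNk : Nf k = A + P := by
      simp only [hNf]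
      rw [div_self hk0, one_smul]
    have hMk : Mf k = S + P := by
      simp only [hMf]
      rw [div_self hk0, one_smul]
    have hc0 : c 0 = ((sqrtM S)⁻¹ * P).trace := by rw [hc]; simp only [hM0]
    rw [hN0, hNk] at hNsum
    rw [hM0, hMk] at hMsum
    rw [hshift] at hMsum
    have hck : 0 ≤ c k := hcnn k
    have h2k : (0 : ℝ) < 2 * k := by positivity
    rw [← hc0]
    have expand : ((∑ j ∈ Finset.range k, c j) + c k - c 0) / (2 * k)
        = (∑ j ∈ Finset.range k, c j) / (2 * k) + c k / (2 * k) - c 0 / (2 * k) := by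
      ring
    rw [expand] at hMsum
    have : 0 ≤ c k / (2 * k) := by positivity
    linarith
  -- pass to the limit
  refine le_of_forall_pos_le_add fun ε hε => ?_
  set C := ((sqrtM S)⁻¹ * P).trace with hC
  have hCnn : 0 ≤ C := trace_mul_psd_nonneg (sqrtM_posDef hS).inv.posSemidef hP
  obtain ⟨k, hk⟩ := exists_nat_gt (C / (2 * ε))
  have hkpos : 0 < k := by
    by_contra h
    push_neg at h
    interval_cases k
    · simp at hk
      nlinarith [div_nonneg hCnn (by positivity : (0:ℝ) ≤ 2 * ε)]
  have := key k hkpos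
  have hkR : (0 : ℝ) < k := Nat.cast_pos.mpr hkpos
  have hC2k : C / (2 * k) ≤ ε := by
    rw [div_le_iff₀ (by positivity)]
    have : C / (2 * ε) < k := hk
    rw [div_lt_iff₀ (by positivity)] at this
    nlinarith
  linarith
lemma vecMulVec_mulVec (m x : Fin n → ℝ) : vecMulVec m m *ᵥ x = (m ⬝ᵥ x) • m := by
  ext i
  simp only [Matrix.mulVec, Matrix.vecMulVec_apply, dotProduct, Pi.smul_apply,
    smul_eq_mul, Finset.sum_mul, Finset.mul_sum]
  exact Finset.sum_congr rfl fun j _ => by ring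

lemma vecMulVec_psd (m : Fin n → ℝ) : (vecMulVec m m).PosSemidef := by
  refine .of_dotProduct_mulVec_nonneg ?_ fun x => ?_
  · ext i j
    simp [Matrix.conjTranspose_apply, Matrix.vecMulVec_apply, mul_comm]
  · simp only [star_trivial]
    rw [vecMulVec_mulVec, dotProduct_smul, smul_eq_mul, dotProduct_comm]
    exact mul_self_nonneg _

end LeonAux

open LeonAux

theorem leon_gradient_stability {n : ℕ} (m : Fin n → ℝ)
    {S T : Matrix (Fin n) (Fin n) ℝ} (hS : S.PosDef) (hT : T.PosDef)
    (hST : (T - S).PosSemidef) {η : ℝ} (hη : 0 < η)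
    {gS gT : Fin n → ℝ}
    (hgS : gS = η • ((sqrtM (vecMulVec m m + S))⁻¹ *ᵥ m))
    (hgT : gT = η • ((sqrtM (vecMulVec m m + T))⁻¹ *ᵥ m)) :
    (gT - gS) ⬝ᵥ (sqrtM T *ᵥ (gT - gS)) ≤ η ^ 2 * ((sqrtM T).trace - (sqrtM S).trace) := by
  classical
  set X := vecMulVec m m with hXdef
  have hXpsd : X.PosSemidef := vecMulVec_psd m
  set A := X + S with hAdef
  set B := X + T with hBdef
  have hApd : A.PosDef := Matrix.PosDef.posSemidef_add hXpsd hS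
  have hBpd : B.PosDef := Matrix.PosDef.posSemidef_add hXpsd hT
  set F := sqrtM A with hFdef
  set G := sqrtM B with hGdef
  have hFpd : F.PosDef := sqrtM_posDef hApd
  have hGpd : G.PosDef := sqrtM_posDef hBpd
  have hFF : F * F = A := sqrtM_mul_self hApd.posSemidef
  have hGG : G * G = B := sqrtM_mul_self hBpd.posSemidef
  set Fi := F⁻¹ with hFidef
  set Gi := G⁻¹ with hGidef
  have hFiF : Fi * F = 1 := pd_inv_mul hFpd
  have hFFi : F * Fi = 1 := pd_mul_inv hFpd
  have hGiG : Gi * G = 1 := pd_inv_mul hGpd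
  have hGGi : G * Gi = 1 := pd_mul_inv hGpd
  have hFipd : Fi.PosDef := hFpd.inv
  have hGipd : Gi.PosDef := hGpd.inv
  -- the difference vector
  set w : Fin n → ℝ := Gi *ᵥ m - Fi *ᵥ m with hwdef
  have hgdiff : gT - gS = η • w := by
    rw [hgT, hgS, hwdef, ← smul_sub]
  -- B - A = T - S etc.
  have hBA : (B - A).PosSemidef := by
    have : B - A = T - S := by rw [hAdef, hBdef]; abel
    rw [this]; exact hST
  have hAS : (A - S).PosSemidef := by
    have : A - S = X := by rw [hAdef]; abel
    rw [this]; exact hXpsd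
  have hBT : (B - T).PosSemidef := by
    have : B - T = X := by rw [hBdef]; abel
    rw [this]; exact hXpsd
  have hGF : (G - F).PosSemidef := sqrt_mono hApd hBpd hBA
  have hFiGi : (Fi - Gi).PosSemidef := inv_antitone hFpd hGpd hGF
  have hGTpsd : (G - sqrtM T).PosSemidef := sqrt_mono hT hBpd hBT
  -- the scalar quantities
  set a : ℝ := m ⬝ᵥ (Gi *ᵥ m) with hadef
  set b : ℝ := m ⬝ᵥ (Fi *ᵥ m) with hbdef
  set c : ℝ := m ⬝ᵥ ((Fi * G * Fi) *ᵥ m) with hcdef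
  set p : ℝ := (Gi * T).trace with hpdef
  set q : ℝ := (Fi * S).trace with hqdef
  set r : ℝ := ((Fi * G * Fi) * S).trace with hrdef
  -- trace identities
  have hGiB : Gi * B = G := by
    calc Gi * B = Gi * (G * G) := by rw [hGG]
    _ = (Gi * G) * G := by rw [Matrix.mul_assoc]
    _ = G := by rw [hGiG, one_mul]
  have hFiA : Fi * A = F := by
    calc Fi * A = Fi * (F * F) := by rw [hFF]
    _ = (Fi * F) * F := by rw [Matrix.mul_assoc]
    _ = F := by rw [hFiF, one_mul]
  have f1 : G.trace = a + p := by
    have h1 : G.trace = (Gi * X).trace + (Gi * T).trace := by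
      rw [← hGiB, hBdef, Matrix.mul_add, Matrix.trace_add]
    rw [h1, hadef, dot_eq_trace, hXdef, hpdef]
  have f2 : F.trace = b + q := by
    have h1 : F.trace = (Fi * X).trace + (Fi * S).trace := by
      rw [← hFiA, hAdef, Matrix.mul_add, Matrix.trace_add]
    rw [h1, hbdef, dot_eq_trace, hXdef, hqdef]
  have hXAS : X = A - S := by rw [hAdef]; abel
  have f3 : c = G.trace - r := by
    have h0 : (Fi * G * Fi) * A = Fi * G * F := by
      calc (Fi * G * Fi) * A = (Fi * G * Fi) * (F * F) := by rw [hFF]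
      _ = Fi * G * ((Fi * F) * F) := by noncomm_ring
      _ = Fi * G * F := by rw [hFiF, one_mul]
    have h1 : ((Fi * G * Fi) * A).trace = G.trace := by
      rw [h0, Matrix.trace_mul_cycle, hFFi, one_mul]
    rw [hcdef, dot_eq_trace, ← hXdef, hXAS, Matrix.mul_sub, Matrix.trace_sub, h1, hrdef]
  have f4 : b = F.trace - q := by
    have h1 : (Fi * A).trace = F.trace := by rw [hFiA]
    rw [hbdef, dot_eq_trace, ← hXdef, hXAS, Matrix.mul_sub, Matrix.trace_sub, h1, hqdef]
  -- the two nonnegativity facts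
  have n1 : a ≤ b := by
    have h := psd_dot hFiGi m
    rw [Matrix.sub_mulVec, dotProduct_sub] at h
    rw [hadef, hbdef]; linarith
  have n2 : q ≤ r := by
    have hconj : (Fi * (G - F) * Fi).PosSemidef := conj_psd hGF hFipd.isHermitian
    have h := trace_mul_psd_nonneg hconj hS.posSemidef
    have hexp : Fi * (G - F) * Fi = Fi * G * Fi - Fi := by
      calc Fi * (G - F) * Fi = Fi * G * Fi - (Fi * F) * Fi := by noncomm_ring
      _ = Fi * G * Fi - Fi := by rw [hFiF, one_mul]
    rw [hexp, Matrix.sub_mul, Matrix.trace_sub] at h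
    have : (Fi * S).trace = q := rfl
    rw [hqdef, hrdef]; linarith
  -- quadratic form identity
  have hZ : (Gi - Fi).IsHermitian := hGipd.isHermitian.sub hFipd.isHermitian
  have hwZ : w = (Gi - Fi) *ᵥ m := by rw [hwdef, Matrix.sub_mulVec]
  have hZGZ : (Gi - Fi) * G * (Gi - Fi) = Gi - Fi - Fi + Fi * G * Fi := by
    have e1 : Gi * G * Gi = Gi := by rw [hGiG, one_mul]
    have e2 : Gi * G * Fi = Fi := by rw [hGiG, one_mul]
    have e3 : Fi * G * Gi = Fi := by rw [Matrix.mul_assoc, hGGi, mul_one]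
    calc (Gi - Fi) * G * (Gi - Fi)
        = Gi * G * Gi - Gi * G * Fi - Fi * G * Gi + Fi * G * Fi := by noncomm_ring
    _ = Gi - Fi - Fi + Fi * G * Fi := by rw [e1, e2, e3]
  have hquad : w ⬝ᵥ (G *ᵥ w) = a - 2 * b + c := by
    have h1 : w ⬝ᵥ (G *ᵥ w) = m ⬝ᵥ (((Gi - Fi) * G * (Gi - Fi)) *ᵥ m) := by
      rw [hwZ, ← Matrix.mulVec_mulVec, ← Matrix.mulVec_mulVec]
      rw [herm_dot hZ m (G *ᵥ ((Gi - Fi) *ᵥ m))]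
    rw [h1, hZGZ, Matrix.add_mulVec, Matrix.sub_mulVec, Matrix.sub_mulVec,
      dotProduct_add, dotProduct_sub, dotProduct_sub]
    rw [hadef, hbdef, hcdef]; ring
  -- chain of inequalities
  have step1 : w ⬝ᵥ (sqrtM T *ᵥ w) ≤ w ⬝ᵥ (G *ᵥ w) := by
    have h := psd_dot hGTpsd w
    rw [Matrix.sub_mulVec, dotProduct_sub] at h
    linarith
  have step2 : w ⬝ᵥ (G *ᵥ w) ≤ G.trace - F.trace := by
    rw [hquad]; linarith
  have step3 : G.trace - F.trace ≤ (sqrtM T).trace - (sqrtM S).trace := by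
    have hsub := submod hS hApd hAS hST
    have e1 : A + (T - S) = B := by rw [hAdef, hBdef]; abel
    have e2 : S + (T - S) = T := by abel
    rw [e1, e2] at hsub
    exact hsub
  -- conclude
  have hfinal : w ⬝ᵥ (sqrtM T *ᵥ w) ≤ (sqrtM T).trace - (sqrtM S).trace := by linarith
  rw [hgdiff, Matrix.mulVec_smul, smul_dotProduct, dotProduct_smul]
  simp only [smul_eq_mul]
  calc η * (η * (w ⬝ᵥ (sqrtM T *ᵥ w))) = η ^ 2 * (w ⬝ᵥ (sqrtM T *ᵥ w)) := by ring
  _ ≤ η ^ 2 * ((sqrtM T).trace - (sqrtM S).trace) :=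
      mul_le_mul_of_nonneg_left hfinal (by positivity)
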